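/- Let a_n → a with a_n, a > 0, b > 0 fixed, and let f : (1,∞) → ℝ be monotone and integrable against ν_{a,b} as well as against each ν_{a_n,b}, where ν_{c,b} is the probability measure on (1,∞) with density C_{c,b}·√(x²−1)·exp(−(2c/b²)x). If additionally a_n ≥ a for all n, then ν_{a_n,b}(f) → ν_{a,b}(f) as n → ∞. -/

import Mathlib

open MeasureTheory Filter

/-- Continuity of the invariant measures `ν_{c,b}` in the parameter `c`: if `aₙ → a` with
`aₙ ≥ a > 0` and `f` is monotone and integrable against the (unnormalized) densities, then
`ν_{aₙ,b}(f) → ν_{a,b}(f)`, where `ν_{c,b}(f)` is the normalized integral of `f` against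
`√(x²−1)·exp(−(2c/b²)x)` on `(1,∞)`. -/
theorem nu_integral_tendsto
    (a b : ℝ) (ha : 0 < a) (hb : 0 < b)
    (aseq : ℕ → ℝ) (haseq : ∀ n, 0 < aseq n) (hge : ∀ n, a ≤ aseq n)
    (hlim : Tendsto aseq atTop (nhds a))
    (ρ : ℝ → ℝ → ℝ)
    (hρ : ρ = fun c x => Real.sqrt (x ^ 2 - 1) * Real.exp (-(2 * c / b ^ 2) * x))
    (f : ℝ → ℝ)
    (hmono : MonotoneOn f (Set.Ioi 1) ∨ AntitoneOn f (Set.Ioi 1))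
    (hint : IntegrableOn (fun x => f x * ρ a x) (Set.Ioi 1))
    (hintn : ∀ n, IntegrableOn (fun x => f x * ρ (aseq n) x) (Set.Ioi 1)) :
    Tendsto
      (fun n => (∫ x in Set.Ioi (1:ℝ), f x * ρ (aseq n) x) /
                (∫ x in Set.Ioi (1:ℝ), ρ (aseq n) x))
      atTop
      (nhds ((∫ x in Set.Ioi (1:ℝ), f x * ρ a x) / (∫ x in Set.Ioi (1:ℝ), ρ a x))) := by
  subst hρ
  set ρ : ℝ → ℝ → ℝ := fun c x => Real.sqrt (x ^ 2 - 1) * Real.exp (-(2 * c / b ^ 2) * x)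
    with hρdef
  have hb2 : 0 < b ^ 2 := by positivity
  -- pointwise nonnegativity
  have hρ_nonneg : ∀ c x, 0 ≤ ρ c x := fun c x => by
    apply mul_nonneg (Real.sqrt_nonneg _) (Real.exp_pos _).le
  -- monotone domination: a ≤ c → ρ c x ≤ ρ a x for x ≥ 0
  have hdom : ∀ c x, a ≤ c → 0 ≤ x → ρ c x ≤ ρ a x := by
    intro c x hac hx
    apply mul_le_mul_of_nonneg_left _ (Real.sqrt_nonneg _)
    apply Real.exp_le_exp.2
    have h1 : 2 * a / b ^ 2 ≤ 2 * c / b ^ 2 := by gcongr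
    nlinarith [mul_le_mul_of_nonneg_right h1 hx]
  -- continuity in the parameter c: ρ (aseq n) x → ρ a x
  have hptwise : ∀ x : ℝ, Tendsto (fun n => ρ (aseq n) x) atTop (nhds (ρ a x)) := by
    intro x
    apply Tendsto.const_mul
    apply (Real.continuous_exp.tendsto _).comp
    have : Tendsto (fun n => -(2 * aseq n / b ^ 2) * x) atTop (nhds (-(2 * a / b ^ 2) * x)) := by
      apply Tendsto.mul_const
      apply Tendsto.neg
      apply Tendsto.div_const
      exact (hlim.const_mul 2)
    exact this
  -- measurability of ρ c
  have hmeas : ∀ c : ℝ, Continuous (ρ c) := by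
    intro c
    apply Continuous.mul
    · exact Real.continuous_sqrt.comp (by continuity)
    · exact Real.continuous_exp.comp (by continuity)
  -- integrability of ρ a on Ioi 1
  have hρa_int : IntegrableOn (ρ a) (Set.Ioi 1) := by
    have hk : 0 < 2 * a / b ^ 2 := by positivity
    have hbig : IntegrableOn (fun x : ℝ => x ^ (1:ℝ) * Real.exp (-(2 * a / b ^ 2) * x ^ (1:ℝ)))
        (Set.Ioi 0) := integrableOn_rpow_mul_exp_neg_mul_rpow (by norm_num) one_pos hk
    have hbig' : IntegrableOn (fun x : ℝ => x * Real.exp (-(2 * a / b ^ 2) * x)) (Set.Ioi 1) := by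
      refine (hbig.mono_set (Set.Ioi_subset_Ioi (by norm_num))).congr_fun (fun x hx => ?_)
        measurableSet_Ioi
      simp [Real.rpow_one]
    refine Integrable.mono hbig' ((hmeas a).aestronglyMeasurable.restrict) ?_
    filter_upwards [ae_restrict_mem measurableSet_Ioi] with x hx
    have hx1 : (1:ℝ) < x := hx
    have h0 : (0:ℝ) ≤ x := by linarith
    rw [Real.norm_eq_abs, Real.norm_eq_abs, abs_of_nonneg (hρ_nonneg a x),
      abs_of_nonneg (by positivity : (0:ℝ) ≤ x * Real.exp (-(2 * a / b ^ 2) * x))]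
    apply mul_le_mul_of_nonneg_right _ (Real.exp_pos _).le
    calc Real.sqrt (x ^ 2 - 1) ≤ Real.sqrt (x ^ 2) := Real.sqrt_le_sqrt (by linarith)
      _ = x := by rw [Real.sqrt_sq h0]
  -- integrability of ρ (aseq n) on Ioi 1
  have hρn_int : ∀ n, IntegrableOn (ρ (aseq n)) (Set.Ioi 1) := by
    intro n
    refine Integrable.mono hρa_int ((hmeas _).aestronglyMeasurable.restrict) ?_
    filter_upwards [ae_restrict_mem measurableSet_Ioi] with x hx
    rw [Real.norm_eq_abs, Real.norm_eq_abs, abs_of_nonneg (hρ_nonneg _ x),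
      abs_of_nonneg (hρ_nonneg a x)]
    exact hdom _ x (hge n) (by linarith [Set.mem_Ioi.1 hx])
  -- numerator convergence via dominated convergence
  have hnum : Tendsto (fun n => ∫ x in Set.Ioi (1:ℝ), f x * ρ (aseq n) x) atTop
      (nhds (∫ x in Set.Ioi (1:ℝ), f x * ρ a x)) := by
    refine tendsto_integral_of_dominated_convergence (fun x => |f x * ρ a x|)
      (fun n => (hintn n).aestronglyMeasurable) hint.abs ?_ ?_
    · intro n
      filter_upwards [ae_restrict_mem measurableSet_Ioi] with x hx
      have hx1 : (1:ℝ) < x := hx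
      calc ‖f x * ρ (aseq n) x‖ = |f x| * ρ (aseq n) x := by
            rw [Real.norm_eq_abs, abs_mul, abs_of_nonneg (hρ_nonneg _ x)]
        _ ≤ |f x| * ρ a x :=
            mul_le_mul_of_nonneg_left (hdom _ x (hge n) (by linarith)) (abs_nonneg _)
        _ = |f x * ρ a x| := by rw [abs_mul, abs_of_nonneg (hρ_nonneg a x)]
    · filter_upwards with x
      exact (hptwise x).const_mul (f x)
  -- denominator convergence via dominated convergence
  have hden : Tendsto (fun n => ∫ x in Set.Ioi (1:ℝ), ρ (aseq n) x) atTop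
      (nhds (∫ x in Set.Ioi (1:ℝ), ρ a x)) := by
    refine tendsto_integral_of_dominated_convergence (ρ a)
      (fun n => (hmeas _).aestronglyMeasurable.restrict) hρa_int ?_ ?_
    · intro n
      filter_upwards [ae_restrict_mem measurableSet_Ioi] with x hx
      rw [Real.norm_eq_abs, abs_of_nonneg (hρ_nonneg _ x)]
      exact hdom _ x (hge n) (by linarith [Set.mem_Ioi.1 hx])
    · filter_upwards with x using hptwise x
  -- positivity of the limiting denominator
  have hpos : 0 < ∫ x in Set.Ioi (1:ℝ), ρ a x := by
    rw [setIntegral_pos_iff_support_of_nonneg_ae ?_ hρa_int]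
    · have hsub : Set.Ioi (1:ℝ) ⊆ Function.support (ρ a) ∩ Set.Ioi 1 := by
        intro x hx
        refine ⟨?_, hx⟩
        have hx1 : (1:ℝ) < x := hx
        have : 0 < ρ a x := by
          apply mul_pos _ (Real.exp_pos _)
          apply Real.sqrt_pos.2; nlinarith
        exact ne_of_gt this
      calc (0:ENNReal) < volume (Set.Ioi (1:ℝ)) := by simp
        _ ≤ volume (Function.support (ρ a) ∩ Set.Ioi 1) := measure_mono hsub
    · filter_upwards with x using hρ_nonneg a x
  exact hnum.div hden (ne_of_gt hpos)
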